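/- Let h : ℝⁿ → ℝ be C² and strictly convex with invertible Hessian on an open convex set U, with ∇h a diffeomorphism from U to V and inverse ∇h*. Let g : U → ℝ be differentiable and define ψ(y) = −h(y) + ⟨∇h(y), y⟩ − g(y) on U. Then the map B(y) := ∇(ψ ∘ ∇h*)(∇h(y)) satisfies B(y) = y − (∇²h(y))⁻¹ ∇g(y) for all y ∈ U. -/

import Mathlib

open scoped RealInnerProductSpace

lemma hessian_symm_aux {E : Type*} [NormedAddCommGroup E] [InnerProductSpace ℝ E]
    [CompleteSpace E] {h : E → ℝ} {grad : E → E} {H : E →L[ℝ] E} {y : E}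
    (hf : ∀ᶠ w in nhds y, HasGradientAt h (grad w) w) (hx : HasFDerivAt grad H y)
    (u v : E) : ⟪H u, v⟫ = ⟪H v, u⟫ := by
  let tD : E →L[ℝ] (E →L[ℝ] ℝ) :=
    (InnerProductSpace.toDual ℝ E).toLinearIsometry.toContinuousLinearMap
  have hf' : ∀ᶠ w in nhds y, HasFDerivAt h ((fun w => tD (grad w)) w) w := by
    filter_upwards [hf] with w hw using hw.hasFDerivAt
  have hx' : HasFDerivAt (fun w => tD (grad w)) (tD.comp H) y :=
    tD.hasFDerivAt.comp y hx
  have := second_derivative_symmetric_of_eventually_of_real hf' hx' u v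
  exact this

theorem stmt7 {n : ℕ} (U V : Set (EuclideanSpace ℝ (Fin n)))
    (h g : EuclideanSpace ℝ (Fin n) → ℝ)
    (grad gradStar g' : EuclideanSpace ℝ (Fin n) → EuclideanSpace ℝ (Fin n))
    (H : EuclideanSpace ℝ (Fin n) → (EuclideanSpace ℝ (Fin n) ≃L[ℝ] EuclideanSpace ℝ (Fin n)))
    (hUopen : IsOpen U) (hVopen : IsOpen V) (hUconv : Convex ℝ U)
    (hstrict : StrictConvexOn ℝ U h)
    (hgrad : ∀ y ∈ U, HasGradientAt h (grad y) y)
    (hHess : ∀ y ∈ U, HasFDerivAt grad ((H y : EuclideanSpace ℝ (Fin n) →L[ℝ] EuclideanSpace ℝ (Fin n))) y)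
    (hmaps : Set.MapsTo grad U V) (hsurj : Set.SurjOn grad U V)
    (hinv1 : ∀ y ∈ U, gradStar (grad y) = y)
    (hinv2 : ∀ z ∈ V, grad (gradStar z) = z)
    (hcont : ContinuousOn gradStar V)
    (hgradg : ∀ y ∈ U, HasGradientAt g (g' y) y) :
    ∀ y ∈ U, HasGradientAt
      (fun z => -h (gradStar z) + ⟪grad (gradStar z), gradStar z⟫ - g (gradStar z))
      (y - (H y).symm (g' y)) (grad y) := by
  intro y hy
  have hz₀V : grad y ∈ V := hmaps hy
  have hgsy : gradStar (grad y) = y := hinv1 y hy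
  have hgs : HasFDerivAt gradStar
      ((H y).symm : EuclideanSpace ℝ (Fin n) →L[ℝ] EuclideanSpace ℝ (Fin n)) (grad y) := by
    apply HasFDerivAt.of_local_left_inverse (f := grad) (f' := H y)
    · exact hcont.continuousAt (hVopen.mem_nhds hz₀V)
    · rw [hgsy]; exact hHess y hy
    · filter_upwards [hVopen.mem_nhds hz₀V] with z hz using hinv2 z hz
  have hsym : ∀ u v : EuclideanSpace ℝ (Fin n), ⟪H y u, v⟫ = ⟪H y v, u⟫ := by
    intro u v
    exact hessian_symm_aux (h := h)
      (by filter_upwards [hUopen.mem_nhds hy] with w hw using hgrad w hw) (hHess y hy) u v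
  have hh : HasFDerivAt h (InnerProductSpace.toDual ℝ _ (grad y)) y := (hgrad y hy).hasFDerivAt
  have hinner : HasFDerivAt (fun w => ⟪grad w, w⟫)
      ((fderivInnerCLM ℝ (grad y, y)).comp
        (((H y : EuclideanSpace ℝ (Fin n) →L[ℝ] EuclideanSpace ℝ (Fin n))).prod
          (ContinuousLinearMap.id ℝ _))) y :=
    (hHess y hy).inner ℝ (hasFDerivAt_id y)
  have hg2 : HasFDerivAt g (InnerProductSpace.toDual ℝ _ (g' y)) y := (hgradg y hy).hasFDerivAt
  have hφ : HasFDerivAt (fun w => -h w + ⟪grad w, w⟫ - g w)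
      (-((InnerProductSpace.toDual ℝ _ (grad y) : EuclideanSpace ℝ (Fin n) →L[ℝ] ℝ))
        + ((fderivInnerCLM ℝ (grad y, y)).comp
        (((H y : EuclideanSpace ℝ (Fin n) →L[ℝ] EuclideanSpace ℝ (Fin n))).prod
          (ContinuousLinearMap.id ℝ _)))
        - (InnerProductSpace.toDual ℝ _ (g' y) : EuclideanSpace ℝ (Fin n) →L[ℝ] ℝ)) y :=
    (hh.neg.add hinner).sub hg2
  rw [hgsy.symm] at hφ
  have hcomp := hφ.comp (grad y) hgs
  rw [hasGradientAt_iff_hasFDerivAt]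
  have hcomp' : HasFDerivAt
      (fun z => -h (gradStar z) + ⟪grad (gradStar z), gradStar z⟫ - g (gradStar z))
      ((-((InnerProductSpace.toDual ℝ _ (grad (gradStar (grad y))) :
          EuclideanSpace ℝ (Fin n) →L[ℝ] ℝ))
        + ((fderivInnerCLM ℝ (grad (gradStar (grad y)), gradStar (grad y))).comp
        (((H (gradStar (grad y)) : EuclideanSpace ℝ (Fin n) →L[ℝ] EuclideanSpace ℝ (Fin n))).prod
          (ContinuousLinearMap.id ℝ _)))
        - (InnerProductSpace.toDual ℝ _ (g' (gradStar (grad y))) :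
          EuclideanSpace ℝ (Fin n) →L[ℝ] ℝ)).comp
        ((H y).symm : EuclideanSpace ℝ (Fin n) →L[ℝ] EuclideanSpace ℝ (Fin n))) (grad y) := hcomp
  rw [hgsy] at hcomp'
  refine hcomp'.congr_fderiv ?_
  ext v
  have hHsymm : ⟪g' y, (H y).symm v⟫ = ⟪(H y).symm (g' y), v⟫ := by
    have h1 : (H y) ((H y).symm (g' y)) = g' y := (H y).apply_symm_apply _
    have h2 : (H y) ((H y).symm v) = v := (H y).apply_symm_apply _
    calc ⟪g' y, (H y).symm v⟫ = ⟪H y ((H y).symm (g' y)), (H y).symm v⟫ := by rw [h1]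
      _ = ⟪H y ((H y).symm v), (H y).symm (g' y)⟫ := hsym _ _
      _ = ⟪(H y).symm (g' y), v⟫ := by rw [h2, real_inner_comm]
  have hHv : (H y : EuclideanSpace ℝ (Fin n) →L[ℝ] EuclideanSpace ℝ (Fin n)) ((H y).symm v) = v :=
    (H y).apply_symm_apply _
  simp only [ContinuousLinearMap.comp_apply, ContinuousLinearMap.add_apply,
    ContinuousLinearMap.sub_apply, ContinuousLinearMap.neg_apply,
    ContinuousLinearMap.prod_apply, ContinuousLinearMap.id_apply,
    fderivInnerCLM_apply, InnerProductSpace.toDual_apply_apply, ContinuousLinearEquiv.coe_coe, hHv]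
  rw [hHsymm, inner_sub_left, real_inner_comm y v]
  ring
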